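/- Measuring implies the negation of Weak Club Guessing: if measuring holds, then for every ladder system (C_δ)_{δ ∈ Lim ∩ ω₁} there is a club C ⊆ ω₁ such that C ∩ C_δ is finite for every δ ∈ C. -/

import Mathlib

noncomputable def omega1 : Ordinal := (Cardinal.aleph 1).ord

def IsLimitPointOf (X : Set Ordinal) (x : Ordinal) : Prop :=
  ∀ α < x, ∃ ε ∈ X, α < ε ∧ ε < x

def IsClosedIn (C : Set Ordinal) (δ : Ordinal) : Prop :=
  C ⊆ Set.Iio δ ∧ ∀ x, x ≠ 0 → x < δ → IsLimitPointOf C x → x ∈ C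

def IsClubIn (C : Set Ordinal) (δ : Ordinal) : Prop :=
  IsClosedIn C δ ∧ ∀ α < δ, ∃ ε ∈ C, α < ε

def IsClubOrd (C : Set Ordinal) : Prop := IsClubIn C omega1

def Measures (C : Set Ordinal) (Cs : Ordinal.{0} → Set Ordinal.{0}) : Prop :=
  ∀ δ ∈ C, ∃ α < δ,
    (∀ x ∈ C, x < δ → α ≤ x → x ∈ Cs δ) ∨ (∀ x ∈ C, α ≤ x → x ∉ Cs δ)


def Measuring : Prop :=
  ∀ Cs : Ordinal.{0} → Set Ordinal.{0}, (∀ δ < omega1, IsClosedIn (Cs δ) δ) →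
    ∃ C, IsClubOrd C ∧ Measures C Cs

/-- Initial segments of an order-type-ω cofinal subset of `δ` are finite. -/
lemma ladder_initseg_finite {S : Set Ordinal} {δ x : Ordinal}
    (hcof : ∀ α < δ, ∃ ε ∈ S, α < ε)
    (hω : ∃ f : ℕ → Ordinal, StrictMono f ∧ Set.range f = S)
    (hx : x < δ) : (S ∩ Set.Iio x).Finite := by
  obtain ⟨f, hf, hrange⟩ := hω
  obtain ⟨ε, hεS, hxε⟩ := hcof x hx
  rw [← hrange] at hεS
  obtain ⟨n, rfl⟩ := hεS
  refine ((Set.finite_Iio n).image f).subset ?_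
  rintro y ⟨hyS, hy⟩
  rw [← hrange] at hyS
  obtain ⟨m, rfl⟩ := hyS
  exact ⟨m, hf.lt_iff_lt.mp (hy.trans hxε), rfl⟩

/-- An order-type-ω cofinal subset of `δ` has no limit points below `δ`. -/
lemma ladder_no_limit_point {S : Set Ordinal} {δ x : Ordinal}
    (hcof : ∀ α < δ, ∃ ε ∈ S, α < ε)
    (hω : ∃ f : ℕ → Ordinal, StrictMono f ∧ Set.range f = S)
    (hx0 : x ≠ 0) (hx : x < δ) : ¬ IsLimitPointOf S x := by
  intro hlp
  have hfin : (S ∩ Set.Iio x).Finite := ladder_initseg_finite hcof hω hx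
  rcases Set.eq_empty_or_nonempty (S ∩ Set.Iio x) with he | hne
  · obtain ⟨ε, hεS, hε0, hεx⟩ := hlp 0 (pos_iff_ne_zero.mpr hx0)
    exact (Set.eq_empty_iff_forall_notMem.mp he) ε ⟨hεS, hεx⟩
  · have hmem : sSup (S ∩ Set.Iio x) ∈ S ∩ Set.Iio x := hne.csSup_mem hfin
    obtain ⟨ε, hεS, hβε, hεx⟩ := hlp _ hmem.2
    exact absurd (le_csSup hfin.bddAbove (⟨hεS, hεx⟩ : ε ∈ S ∩ Set.Iio x))
      (not_le.mpr hβε)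

/-- The supremum of a countable family of ordinals below `ω₁` is below `ω₁`. -/
lemma sup_lt_omega1 (g : ℕ → Ordinal) (h : ∀ n, g n < omega1) : (⨆ n, g n) < omega1 := by
  apply Ordinal.iSup_lt_ord_lift _ h
  have : omega1.cof = Cardinal.aleph 1 := Cardinal.isRegular_aleph_one.cof_eq
  rw [this, Cardinal.mk_nat, Cardinal.lift_aleph0]
  exact Cardinal.aleph0_lt_aleph_one

/-- The set of (nonzero) limit points below `ω₁` of a club is a club. -/
lemma limit_points_club {C : Set Ordinal} (hC : IsClubOrd C) :
    IsClubOrd {x | x < omega1 ∧ x ≠ 0 ∧ IsLimitPointOf C x} := by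
  classical
  constructor
  · constructor
    · intro x hx; exact hx.1
    · intro x hx0 hx hlp
      refine ⟨hx, hx0, fun β hβ => ?_⟩
      obtain ⟨ε, hεL, hβε, hεx⟩ := hlp β hβ
      obtain ⟨ε', hε'C, hβε', hε'ε⟩ := hεL.2.2 β hβε
      exact ⟨ε', hε'C, hβε', hε'ε.trans hεx⟩
  · intro α hα
    -- build an increasing ω-sequence in C above α
    let F : Ordinal → Ordinal := fun β => if h : β < omega1 then (hC.2 β h).choose else 0
    have hF : ∀ β, β < omega1 → F β ∈ C ∧ β < F β := by
      intro β h
      simpa only [F, dif_pos h] using ⟨(hC.2 β h).choose_spec.1, (hC.2 β h).choose_spec.2⟩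
    let g : ℕ → Ordinal := fun n => Nat.rec (F α) (fun _ ih => F ih) n
    have hg : ∀ n, g n ∈ C ∧ g n < g (n + 1) := by
      intro n
      induction n with
      | zero =>
          have h0 := hF α hα
          have h1 := hF (F α) (hC.1.1 h0.1)
          exact ⟨h0.1, h1.2⟩
      | succ n ih =>
          have h1 := hF (g (n + 1)) (hC.1.1 ((hF (g n) (hC.1.1 ih.1)).1))
          exact ⟨(hF (g n) (hC.1.1 ih.1)).1, h1.2⟩
    have hglt : ∀ n, g n < omega1 := fun n => hC.1.1 (hg n).1
    have hbdd : BddAbove (Set.range g) := Ordinal.bddAbove_range g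
    have hsup : (⨆ n, g n) < omega1 := sup_lt_omega1 g hglt
    have hle : ∀ n, g n < ⨆ m, g m := fun n =>
      lt_of_lt_of_le (hg n).2 (le_ciSup hbdd (n + 1))
    have hα0 : α < g 0 := (hF α hα).2
    refine ⟨⨆ n, g n, ⟨hsup, ?_, ?_⟩, lt_of_lt_of_le hα0 (le_ciSup hbdd 0)⟩
    · exact fun h => absurd (h ▸ hle 0) (by simp [not_lt_zero])
    · intro β hβ
      obtain ⟨n, hn⟩ := (Ordinal.lt_iSup_iff.mp hβ)
      exact ⟨g n, (hg n).1, hn, hle n⟩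

/-- Measuring implies the negation of Weak Club Guessing: for every ladder system
`(C_δ)_{δ ∈ Lim ∩ ω₁}` there is a club `C ⊆ ω₁` with `C ∩ C_δ` finite for all `δ ∈ C`. -/
theorem measuring_implies_neg_weak_club_guessing (hM : Measuring)
    (Cs : Ordinal.{0} → Set Ordinal.{0})
    (hladder : ∀ δ, δ < omega1 → Order.IsSuccLimit δ →
      Cs δ ⊆ Set.Iio δ ∧ (∀ α < δ, ∃ ε ∈ Cs δ, α < ε) ∧
      ∃ f : ℕ → Ordinal, StrictMono f ∧ Set.range f = Cs δ) :
    ∃ C, IsClubOrd C ∧ ∀ δ ∈ C, Order.IsSuccLimit δ → (C ∩ Cs δ).Finite := by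
  classical
  set Ds : Ordinal.{0} → Set Ordinal.{0} :=
    fun δ => if δ < omega1 ∧ Order.IsSuccLimit δ then Cs δ else ∅ with hDs
  have hDsclosed : ∀ δ < omega1, IsClosedIn (Ds δ) δ := by
    intro δ hδ
    by_cases h : δ < omega1 ∧ Order.IsSuccLimit δ
    · obtain ⟨hsub, hcof, hω⟩ := hladder δ h.1 h.2
      rw [hDs]; simp only [if_pos h]
      refine ⟨hsub, fun x hx0 hx hlp => ?_⟩
      exact absurd hlp (ladder_no_limit_point hcof hω hx0 hx)
    · rw [hDs]; simp only [if_neg h]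
      exact ⟨Set.empty_subset _, fun x _ _ hlp => by
        obtain ⟨ε, hε, _⟩ := hlp 0 (pos_iff_ne_zero.mpr ‹x ≠ 0›)
        exact absurd hε (Set.notMem_empty ε)⟩
  obtain ⟨C, hC, hmeas⟩ := hM Ds hDsclosed
  refine ⟨{x | x < omega1 ∧ x ≠ 0 ∧ IsLimitPointOf C x}, limit_points_club hC, ?_⟩
  intro δ hδ hδlim
  obtain ⟨hδω, hδ0, hδlp⟩ := hδ
  have hLsubC : {x | x < omega1 ∧ x ≠ 0 ∧ IsLimitPointOf C x} ⊆ C := by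
    intro x hx; exact hC.1.2 x hx.2.1 hx.1 hx.2.2
  have hδC : δ ∈ C := hLsubC ⟨hδω, hδ0, hδlp⟩
  obtain ⟨hsub, hcof, hω⟩ := hladder δ hδω hδlim
  have hDsδ : Ds δ = Cs δ := by rw [hDs]; simp [hδω, hδlim]
  obtain ⟨α, hαδ, hcase⟩ := hmeas δ hδC
  rw [hDsδ] at hcase
  rcases hcase with h1 | h2
  · -- tail of C ∩ δ inside Cs δ : no limit points of Cs δ below δ ⟹ no limit
    -- points of C in (α, δ), so L ∩ Cs δ ⊆ (Cs δ ∩ Iio α) ∪ {α}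
    refine ((ladder_initseg_finite hcof hω hαδ).union (Set.finite_singleton α)).subset ?_
    rintro x ⟨⟨hxω, hx0, hxlp⟩, hxCs⟩
    have hxδ : x < δ := hsub hxCs
    rcases lt_trichotomy x α with hlt | heq | hgt
    · exact Or.inl ⟨hxCs, hlt⟩
    · exact Or.inr heq
    · exfalso
      refine ladder_no_limit_point hcof hω hx0 hxδ (fun β hβ => ?_)
      obtain ⟨ε, hεC, hβε, hεx⟩ := hxlp (max β α) (max_lt hβ hgt)
      refine ⟨ε, h1 ε hεC (hεx.trans hxδ) (le_of_lt (lt_of_le_of_lt (le_max_right β α) hβε)),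
        lt_of_le_of_lt (le_max_left β α) hβε, hεx⟩
  · -- tail of C misses Cs δ : L ∩ Cs δ ⊆ Cs δ ∩ Iio α
    refine (ladder_initseg_finite hcof hω hαδ).subset ?_
    rintro x ⟨hxL, hxCs⟩
    refine ⟨hxCs, ?_⟩
    by_contra hge
    exact h2 x (hLsubC hxL) (not_lt.mp hge) hxCs
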